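/- Suppose the exact solution $\hat{x}^n$ on a time block satisfies $\hat{x}^n = \tau^n(A \hat{x}^n + g(y^n)) + \hat{x}^{n-1}$ and the iterate satisfies $x^n = \tau^n(A x^n + g(\tilde{y}^n)) + x^{n-1}$ with the same initial condition $x^{N_{b-1}} = \hat{x}^{N_{b-1}}$, where $A \le 0$, $\tau^n > 0$, and $g$ is $L$-Lipschitz. Then the error satisfies $|\hat{x}^n - x^n| \le \sum_{m=N_{b-1}+1}^{n} \frac{\tau^m L}{\prod_{k=m}^{n}(1-\tau^k A)} |y^m - \tilde{y}^m| \le L \sum_{m=N_{b-1}+1}^{n} \tau^m |y^m - \tilde{y}^m|$. -/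

import Mathlib

theorem block_iteration_error_bound
    (Nb1 Nb : ℤ) (τ : ℤ → ℝ) (A L : ℝ) (hA : A ≤ 0) (hL : 0 ≤ L)
    (hτ : ∀ n ∈ Finset.Ioc Nb1 Nb, 0 < τ n)
    (g : ℝ → ℝ) (hg : ∀ a b : ℝ, |g a - g b| ≤ L * |a - b|)
    (xhat x y yt : ℤ → ℝ)
    (hxhat : ∀ n ∈ Finset.Ioc Nb1 Nb, xhat n = τ n * (A * xhat n + g (y n)) + xhat (n - 1))
    (hx : ∀ n ∈ Finset.Ioc Nb1 Nb, x n = τ n * (A * x n + g (yt n)) + x (n - 1))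
    (hinit : x Nb1 = xhat Nb1) :
    ∀ n ∈ Finset.Ioc Nb1 Nb,
      |xhat n - x n| ≤
        ∑ m ∈ Finset.Ioc Nb1 n,
          (τ m * L / ∏ k ∈ Finset.Icc m n, (1 - τ k * A)) * |y m - yt m| ∧
      (∑ m ∈ Finset.Ioc Nb1 n,
          (τ m * L / ∏ k ∈ Finset.Icc m n, (1 - τ k * A)) * |y m - yt m|)
        ≤ L * ∑ m ∈ Finset.Ioc Nb1 n, τ m * |y m - yt m| := by
  have hfac : ∀ k ∈ Finset.Ioc Nb1 Nb, (1:ℝ) ≤ 1 - τ k * A := by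
    intro k hk
    nlinarith [hτ k hk]
  have hprod : ∀ m n : ℤ, Nb1 < m → n ≤ Nb →
      (1:ℝ) ≤ ∏ k ∈ Finset.Icc m n, (1 - τ k * A) := by
    intro m n hm hn
    calc (1:ℝ) = ∏ _k ∈ Finset.Icc m n, (1:ℝ) := by simp
      _ ≤ ∏ k ∈ Finset.Icc m n, (1 - τ k * A) := by
          apply Finset.prod_le_prod (fun k _ => zero_le_one)
          intro k hk
          obtain ⟨hk1, hk2⟩ := Finset.mem_Icc.mp hk
          exact hfac k (Finset.mem_Ioc.mpr ⟨lt_of_lt_of_le hm hk1, le_trans hk2 hn⟩)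
  have hIoc : ∀ a b : ℤ, a ≤ b → Finset.Ioc a (b+1) = insert (b+1) (Finset.Ioc a b) := by
    intro a b h
    ext k
    simp only [Finset.mem_Ioc, Finset.mem_insert]
    omega
  have hIcc : ∀ a b : ℤ, a ≤ b + 1 → Finset.Icc a (b+1) = insert (b+1) (Finset.Icc a b) := by
    intro a b h
    ext k
    simp only [Finset.mem_Icc, Finset.mem_insert]
    omega
  have key : ∀ n, Nb1 ≤ n → n ≤ Nb →
      |xhat n - x n| ≤ ∑ m ∈ Finset.Ioc Nb1 n,
        (τ m * L / ∏ k ∈ Finset.Icc m n, (1 - τ k * A)) * |y m - yt m| := by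
    refine fun n hn => Int.le_induction
      (motive := fun n _ => n ≤ Nb → |xhat n - x n| ≤ ∑ m ∈ Finset.Ioc Nb1 n,
        (τ m * L / ∏ k ∈ Finset.Icc m n, (1 - τ k * A)) * |y m - yt m|) ?_ ?_ n hn
    · intro _
      simp [hinit]
    · intro n hn ih hle
      have hn' : n ≤ Nb := by omega
      have ihS := ih hn'
      have hmem : n + 1 ∈ Finset.Ioc Nb1 Nb := Finset.mem_Ioc.mpr ⟨by omega, hle⟩
      have hc : (1:ℝ) ≤ 1 - τ (n+1) * A := hfac _ hmem
      have hcpos : (0:ℝ) < 1 - τ (n+1) * A := by linarith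
      have h1 := hxhat (n+1) hmem
      have h2 := hx (n+1) hmem
      have hsimp : n + 1 - 1 = n := by ring
      rw [hsimp] at h1 h2
      have heq : (1 - τ (n+1) * A) * (xhat (n+1) - x (n+1)) =
          τ (n+1) * (g (y (n+1)) - g (yt (n+1))) + (xhat n - x n) := by
        linear_combination h1 - h2
      have habs : (1 - τ (n+1) * A) * |xhat (n+1) - x (n+1)| ≤
          τ (n+1) * L * |y (n+1) - yt (n+1)| + |xhat n - x n| := by
        have hτp : 0 < τ (n+1) := hτ _ hmem
        have hgb := hg (y (n+1)) (yt (n+1))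
        calc (1 - τ (n+1) * A) * |xhat (n+1) - x (n+1)|
            = |(1 - τ (n+1) * A) * (xhat (n+1) - x (n+1))| := by
              rw [abs_mul, abs_of_pos hcpos]
          _ = |τ (n+1) * (g (y (n+1)) - g (yt (n+1))) + (xhat n - x n)| := by rw [heq]
          _ ≤ |τ (n+1) * (g (y (n+1)) - g (yt (n+1)))| + |xhat n - x n| := abs_add_le _ _
          _ ≤ τ (n+1) * L * |y (n+1) - yt (n+1)| + |xhat n - x n| := by
              rw [abs_mul, abs_of_pos hτp]
              nlinarith
      have hnotmem : n + 1 ∉ Finset.Ioc Nb1 n := by simp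
      have hsum : ∑ m ∈ Finset.Ioc Nb1 (n+1),
            (τ m * L / ∏ k ∈ Finset.Icc m (n+1), (1 - τ k * A)) * |y m - yt m|
          = (τ (n+1) * L * |y (n+1) - yt (n+1)| +
              ∑ m ∈ Finset.Ioc Nb1 n,
                (τ m * L / ∏ k ∈ Finset.Icc m n, (1 - τ k * A)) * |y m - yt m|)
              / (1 - τ (n+1) * A) := by
        rw [hIoc Nb1 n hn, Finset.sum_insert hnotmem]
        have hterm : (τ (n+1) * L / ∏ k ∈ Finset.Icc (n+1) (n+1), (1 - τ k * A))
              * |y (n+1) - yt (n+1)|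
            = τ (n+1) * L * |y (n+1) - yt (n+1)| / (1 - τ (n+1) * A) := by
          rw [Finset.Icc_self, Finset.prod_singleton]
          ring
        have hrest : ∀ m ∈ Finset.Ioc Nb1 n,
            (τ m * L / ∏ k ∈ Finset.Icc m (n+1), (1 - τ k * A)) * |y m - yt m|
            = ((τ m * L / ∏ k ∈ Finset.Icc m n, (1 - τ k * A)) * |y m - yt m|)
                / (1 - τ (n+1) * A) := by
          intro m hm
          obtain ⟨hm1, hm2⟩ := Finset.mem_Ioc.mp hm
          have hnm : (n+1) ∉ Finset.Icc m n := by simp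
          rw [hIcc m n (by omega), Finset.prod_insert hnm,
            mul_comm (1 - τ (n+1) * A), ← div_div]
          ring
        rw [Finset.sum_congr rfl hrest, hterm, ← Finset.sum_div]
        ring
      rw [hsum, le_div_iff₀ hcpos]
      nlinarith [habs, ihS]
  intro n hn
  obtain ⟨hn1, hn2⟩ := Finset.mem_Ioc.mp hn
  refine ⟨key n hn1.le hn2, ?_⟩
  rw [Finset.mul_sum]
  apply Finset.sum_le_sum
  intro m hm
  obtain ⟨hm1, hm2⟩ := Finset.mem_Ioc.mp hm
  have hP : (1:ℝ) ≤ ∏ k ∈ Finset.Icc m n, (1 - τ k * A) := hprod m n hm1 hn2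
  have hτp : 0 < τ m := hτ m (Finset.mem_Ioc.mpr ⟨hm1, le_trans hm2 hn2⟩)
  have hd : τ m * L / ∏ k ∈ Finset.Icc m n, (1 - τ k * A) ≤ τ m * L :=
    div_le_self (by positivity) hP
  nlinarith [abs_nonneg (y m - yt m)]
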